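/- Let F be a field of characteristic zero, let F̄ := AlgebraicClosure F, let m ≥ 2, and let h ∈ F[X] with h ≠ 0; write h̄ := Polynomial.map (algebraMap F F̄) h. Suppose f, g ∈ F̄[X] with g monic and h̄ = f * g^m, and suppose g has maximal degree among such factorizations: for all f', g' ∈ F̄[X] with g' monic and h̄ = f' * g'^m, one has g'.natDegree ≤ g.natDegree. Then there exist f₀, g₀ ∈ F[X] with f = Polynomial.map (algebraMap F F̄) f₀ and g = Polynomial.map (algebraMap F F̄) g₀. -/

import Mathlib

open Polynomial

/-- An element of the algebraic closure fixed by all automorphisms lies in the base field. -/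
private lemma fixed_mem_range_aux (F : Type*) [Field F] [CharZero F]
    (x : AlgebraicClosure F)
    (hx : ∀ σ : AlgebraicClosure F ≃ₐ[F] AlgebraicClosure F, σ x = x) :
    x ∈ Set.range (algebraMap F (AlgebraicClosure F)) := by
  classical
  have hint : IsIntegral F x := Algebra.IsIntegral.isIntegral x
  have halg : IsAlgebraic F x := hint.isAlgebraic
  have hp0 : minpoly F x ≠ 0 := minpoly.ne_zero hint
  have hsep : (minpoly F x).Separable := Algebra.IsSeparable.isSeparable F x
  have hroots : ∀ y ∈ (minpoly F x).aroots (AlgebraicClosure F), y = x := by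
    intro y hy
    rw [Polynomial.mem_aroots] at hy
    obtain ⟨σ, hσ⟩ := minpoly.exists_algEquiv_of_root halg hy.2
    calc y = σ.symm (σ y) := (σ.symm_apply_apply y).symm
    _ = σ.symm x := by rw [hσ]
    _ = x := hx σ.symm
  have hnodup : ((minpoly F x).aroots (AlgebraicClosure F)).Nodup :=
    Polynomial.nodup_roots (hsep.map (f := algebraMap F (AlgebraicClosure F)))
  have hsplits : ((minpoly F x).map (algebraMap F (AlgebraicClosure F))).Splits :=
    IsAlgClosed.splits _
  have hcard : ((minpoly F x).aroots (AlgebraicClosure F)).card = (minpoly F x).natDegree := by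
    rw [Polynomial.aroots_def,
      ← Polynomial.natDegree_map (algebraMap F (AlgebraicClosure F)) (p := minpoly F x)]
    exact Polynomial.splits_iff_card_roots.mp hsplits
  have hxmem : x ∈ (minpoly F x).aroots (AlgebraicClosure F) :=
    Polynomial.mem_aroots.mpr ⟨hp0, minpoly.aeval F x⟩
  have hcard1 : ((minpoly F x).aroots (AlgebraicClosure F)).card ≤ 1 := by
    have hcount : ((minpoly F x).aroots (AlgebraicClosure F)).count x
        = ((minpoly F x).aroots (AlgebraicClosure F)).card :=
      Multiset.count_eq_card.mpr fun y hy => (hroots y hy).symm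
    have := Multiset.nodup_iff_count_le_one.mp hnodup x
    omega
  have hdeg : (minpoly F x).natDegree = 1 := by
    have := minpoly.natDegree_pos hint
    omega
  have hdeg' : (minpoly F x).degree = 1 := by
    rw [Polynomial.degree_eq_natDegree hp0, hdeg]; rfl
  exact minpoly.degree_eq_one_iff.mp hdeg'

/-- If `a^m ∣ h` and `b^m ∣ h` then `(lcm a b)^m ∣ h`, for polynomials over a field. -/
private lemma pow_lcm_dvd_aux {K : Type*} [Field K] [DecidableEq K] {a b h : K[X]}
    (ha0 : a ≠ 0) (hb0 : b ≠ 0) {m : ℕ} (ha : a ^ m ∣ h) (hb : b ^ m ∣ h) :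
    lcm a b ^ m ∣ h := by
  set d := gcd a b with hd
  have hd0 : d ≠ 0 := fun h0 => ha0 ((gcd_eq_zero_iff a b).mp h0).1
  obtain ⟨a', ha'⟩ : d ∣ a := gcd_dvd_left a b
  obtain ⟨b', hb'⟩ : d ∣ b := gcd_dvd_right a b
  -- a' and b' are coprime
  have hgcd' : IsUnit (gcd a' b') := by
    have h1 : gcd (d * a') (d * b') = normalize d * gcd a' b' := gcd_mul_left d a' b'
    have h2 : normalize d = d := by rw [hd]; exact normalize_gcd a b
    rw [← ha', ← hb', ← hd, h2] at h1
    have h3 : d * 1 = d * gcd a' b' := by rw [mul_one]; exact h1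
    have h4 := mul_left_cancel₀ hd0 h3
    exact h4 ▸ isUnit_one
  have hcop : IsCoprime a' b' := (gcd_isUnit_iff a' b').mp hgcd'
  have hcopm : IsCoprime (a' ^ m) (b' ^ m) := hcop.pow
  -- write h = a^m * k and extract b'^m ∣ k
  obtain ⟨k, hk⟩ := ha
  have hdvd1 : d ^ m * b' ^ m ∣ d ^ m * (a' ^ m * k) := by
    have h1 : b ^ m ∣ a ^ m * k := hk ▸ hb
    rw [ha', hb', mul_pow, mul_pow, mul_assoc] at h1
    exact h1
  have hdvd2 : b' ^ m ∣ a' ^ m * k :=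
    (mul_dvd_mul_iff_left (pow_ne_zero m hd0)).mp hdvd1
  have hdvd3 : b' ^ m ∣ k := hcopm.symm.dvd_of_dvd_mul_left hdvd2
  obtain ⟨k', hk'⟩ := hdvd3
  have hfull : (d * a' * b') ^ m ∣ h := ⟨k', by
    rw [hk, ha', hk', mul_pow, mul_pow]; ring⟩
  -- lcm a b divides d * a' * b'
  have hlcm : lcm a b ∣ d * a' * b' := by
    have hassoc : Associated (gcd a b * lcm a b) (a * b) := gcd_mul_lcm a b
    have h5 : d * lcm a b ∣ a * b := hassoc.dvd
    have hab : a * b = d * (d * a' * b') := by rw [ha', hb']; ring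
    rw [hab] at h5
    exact (mul_dvd_mul_iff_left hd0).mp h5
  exact dvd_trans (pow_dvd_pow_of_dvd hlcm m) hfull

/-- Two monic polynomials, one dividing the other with no larger degree, are equal. -/
private lemma monic_dvd_eq_aux {K : Type*} [Field K] {p q : K[X]}
    (hp : p.Monic) (hq : q.Monic) (hdvd : p ∣ q) (hdeg : q.natDegree ≤ p.natDegree) :
    p = q := by
  obtain ⟨r, hr⟩ := hdvd
  have hr0 : r ≠ 0 := fun h0 => hq.ne_zero (by rw [hr, h0, mul_zero])
  have hdeg2 : q.natDegree = p.natDegree + r.natDegree := by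
    rw [hr]; exact Polynomial.natDegree_mul hp.ne_zero hr0
  have hrdeg : r.natDegree = 0 := by omega
  have hrmonic : r.Monic := by
    have : q.leadingCoeff = p.leadingCoeff * r.leadingCoeff := by
      rw [hr]; exact Polynomial.leadingCoeff_mul p r
    rw [hq.leadingCoeff, hp.leadingCoeff, one_mul] at this
    exact this.symm
  have : r = 1 := Polynomial.eq_one_of_monic_natDegree_zero hrmonic hrdeg
  rw [hr, this, mul_one]

/-- Lemma 7.1 ('anypolys') of the paper: if h ∈ F[X] and h̄ = f·g^m over the algebraic
closure with g monic of maximal degree, then f and g are defined over F. -/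
theorem stmt_11
    (F : Type*) [Field F] [CharZero F]
    (m : ℕ) (hm : 2 ≤ m)
    (h : Polynomial F) (hh : h ≠ 0)
    (f g : Polynomial (AlgebraicClosure F)) (hg : g.Monic)
    (hfg : Polynomial.map (algebraMap F (AlgebraicClosure F)) h = f * g ^ m)
    (hmax : ∀ f' g' : Polynomial (AlgebraicClosure F), g'.Monic →
      Polynomial.map (algebraMap F (AlgebraicClosure F)) h = f' * g' ^ m →
      g'.natDegree ≤ g.natDegree) :
    (∃ f₀ : Polynomial F, f = Polynomial.map (algebraMap F (AlgebraicClosure F)) f₀) ∧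
    (∃ g₀ : Polynomial F, g = Polynomial.map (algebraMap F (AlgebraicClosure F)) g₀) := by
  classical
  set K := AlgebraicClosure F
  set φ := algebraMap F K with hφ
  have hg0 : g ≠ 0 := hg.ne_zero
  have hhbar : h.map φ ≠ 0 := (Polynomial.map_ne_zero_iff φ.injective).mpr hh
  -- key: f and g are fixed by every automorphism
  have key : ∀ σ : K ≃ₐ[F] K, g.map (σ : K →+* K) = g ∧ f.map (σ : K →+* K) = f := by
    intro σ
    set ρ : K →+* K := (σ : K →+* K) with hρ
    have hρinj : Function.Injective ρ := σ.injective
    -- applying σ to the factorization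
    have hcomm : ρ.comp φ = φ := by
      ext x; simp [hρ, hφ]
    have hhσ : (h.map φ).map ρ = h.map φ := by
      rw [Polynomial.map_map, hcomm]
    have hfgσ : h.map φ = f.map ρ * (g.map ρ) ^ m := by
      conv_lhs => rw [← hhσ, hfg]
      rw [Polynomial.map_mul, Polynomial.map_pow]
    have hgσm : (g.map ρ).Monic := hg.map ρ
    have hgσdeg : (g.map ρ).natDegree = g.natDegree :=
      Polynomial.natDegree_map_eq_of_injective hρinj g
    have hgσ0 : g.map ρ ≠ 0 := hgσm.ne_zero
    -- the lcm
    set L := lcm g (g.map ρ) with hL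
    have hL0 : L ≠ 0 := by
      rw [hL, Ne, lcm_eq_zero_iff]
      push_neg
      exact ⟨hg0, hgσ0⟩
    have hLmonic : L.Monic := by
      have := Polynomial.monic_normalize (p := L) hL0
      rwa [hL, normalize_lcm] at this
    have hdvd1 : g ^ m ∣ h.map φ := ⟨f, by rw [hfg]; ring⟩
    have hdvd2 : (g.map ρ) ^ m ∣ h.map φ := ⟨f.map ρ, by rw [hfgσ]; ring⟩
    have hLdvd : L ^ m ∣ h.map φ := pow_lcm_dvd_aux hg0 hgσ0 hdvd1 hdvd2
    obtain ⟨c, hc⟩ := hLdvd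
    have hLle : L.natDegree ≤ g.natDegree :=
      hmax c L hLmonic (by rw [hc]; ring)
    -- g = L
    have hgL : g = L := monic_dvd_eq_aux hg hLmonic (dvd_lcm_left g (g.map ρ)) hLle
    have hgfix : g.map ρ = g := by
      refine monic_dvd_eq_aux hgσm hg ?_ ?_
      · conv_rhs => rw [hgL]
        exact dvd_lcm_right g (g.map ρ)
      · rw [hgσdeg]
    -- f is fixed too, by cancellation
    have hffix : f.map ρ = f := by
      have h1 : f.map ρ * g ^ m = f * g ^ m := by
        rw [← hfg, hfgσ, hgfix]
      exact mul_right_cancel₀ (pow_ne_zero m hg0) h1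
    exact ⟨hgfix, hffix⟩
  -- conclude: each coefficient is in the range of φ
  have hcoeff : ∀ p : Polynomial K,
      (∀ σ : K ≃ₐ[F] K, p.map (σ : K →+* K) = p) →
      ∃ p₀ : Polynomial F, p = p₀.map φ := by
    intro p hp
    have : ∀ n, p.coeff n ∈ Set.range φ := by
      intro n
      apply fixed_mem_range_aux
      intro σ
      conv_rhs => rw [← hp σ]
      rw [Polynomial.coeff_map]
      rfl
    obtain ⟨q, hq⟩ := (Polynomial.lifts_iff_coeff_lifts p).mpr this
    exact ⟨q, hq.symm⟩
  constructor
  · exact hcoeff f fun σ => (key σ).2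
  · exact hcoeff g fun σ => (key σ).1
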